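/- (Per-length lower bound on OPT) In any feasible schedule with memory capacity M, for each output length o, at most n_o/2 of the n_o requests of that length can complete by time (n_o/2)·vol(o)/M; hence the total latency of requests of length o is at least (n_o/2)·(n_o/2)·vol(o)/M, and summing over o gives OPT ≥ (1/(4M))·∑_o n_o²·vol(o). -/

import Mathlib

/-- (Per-length lower bound on OPT.) All requests arrive at time 0; `c i` is the
completion time (= latency) of request `i` and `len i` its output length. In any
schedule feasible for memory capacity `M` — meaning the total volume of requests
completed by any time `T` is at most `T·M` — the total latency is at least
`(1/(4M))·∑_o n_o²·vol(o)`, where `n_o` is the number of requests of length `o`. -/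
theorem stmt10 {I : Type*} [Fintype I] [DecidableEq I]
    (len c : I → ℕ) (vol : ℕ → ℝ) (M : ℝ)
    (hM : 0 < M) (hvol : ∀ o, 0 < vol o)
    (hfeas : ∀ T : ℕ,
      ∑ i ∈ Finset.univ.filter (fun i => c i ≤ T), vol (len i) ≤ (T : ℝ) * M) :
    1 / (4 * M) * ∑ o ∈ Finset.image len Finset.univ,
        ((Finset.univ.filter (fun i => len i = o)).card : ℝ) ^ 2 * vol o ≤
      ∑ i, (c i : ℝ) := by
  classical
  have key : ∀ o ∈ Finset.image len Finset.univ,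
      1 / (4 * M) * (((Finset.univ.filter (fun i => len i = o)).card : ℝ) ^ 2 * vol o)
        ≤ ∑ i ∈ Finset.univ.filter (fun i => len i = o), (c i : ℝ) := by
    intro o _
    set S := Finset.univ.filter (fun i => len i = o) with hS
    have hvo := hvol o
    set n := S.card with hn
    set x : ℝ := n * vol o / (2 * M) with hx
    have hx0 : 0 ≤ x := by positivity
    set T : ℕ := ⌊x⌋₊ with hT
    set A := S.filter (fun i => c i ≤ T) with hA
    have hAcard : (A.card : ℝ) * vol o ≤ (T : ℝ) * M := by
      have hsub : A ⊆ Finset.univ.filter (fun i => c i ≤ T) := by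
        intro i hi
        simp only [hA, hS, Finset.mem_filter] at hi ⊢
        exact ⟨Finset.mem_univ i, hi.2⟩
      have h1 : ∑ i ∈ A, vol (len i) = (A.card : ℝ) * vol o := by
        rw [Finset.sum_congr rfl (fun i hi => by
          have hio : len i = o := by
            simp only [hA, hS, Finset.mem_filter] at hi
            exact hi.1.2
          rw [hio]), Finset.sum_const, nsmul_eq_mul]
      have h2 : ∑ i ∈ A, vol (len i)
          ≤ ∑ i ∈ Finset.univ.filter (fun i => c i ≤ T), vol (len i) :=
        Finset.sum_le_sum_of_subset_of_nonneg hsub (fun i _ _ => (hvol _).le)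
      linarith [hfeas T]
    have hAle : (A.card : ℝ) ≤ (n : ℝ) / 2 := by
      have hTx : (T : ℝ) ≤ x := Nat.floor_le hx0
      have hxM : x * M = (n : ℝ) * vol o / 2 := by
        rw [hx]; field_simp
      nlinarith
    set B := S.filter (fun i => ¬ c i ≤ T) with hB
    have hcards : A.card + B.card = n := Finset.card_filter_add_card_filter_not _
    have hBge : (n : ℝ) / 2 ≤ (B.card : ℝ) := by
      have : (A.card : ℝ) + (B.card : ℝ) = (n : ℝ) := by exact_mod_cast hcards
      linarith
    have hsum : (B.card : ℝ) * ((T : ℝ) + 1) ≤ ∑ i ∈ B, (c i : ℝ) := by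
      have := Finset.card_nsmul_le_sum B (fun i => (c i : ℝ)) ((T : ℝ) + 1)
        (fun i hi => by
          have : T < c i := by
            simp only [hB, Finset.mem_filter] at hi
            exact Nat.lt_of_not_le hi.2
          have : (T : ℝ) + 1 ≤ (c i : ℝ) := by exact_mod_cast Nat.succ_le_of_lt this
          exact this)
      rwa [nsmul_eq_mul] at this
    have hBS : ∑ i ∈ B, (c i : ℝ) ≤ ∑ i ∈ S, (c i : ℝ) :=
      Finset.sum_le_sum_of_subset_of_nonneg (Finset.filter_subset _ _)
        (fun i _ _ => Nat.cast_nonneg _)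
    have hxT1 : x ≤ (T : ℝ) + 1 := (Nat.lt_floor_add_one x).le
    have hmain : (n : ℝ) / 2 * x ≤ (B.card : ℝ) * ((T : ℝ) + 1) :=
      mul_le_mul hBge hxT1 hx0 (Nat.cast_nonneg _)
    have heq : 1 / (4 * M) * ((n : ℝ) ^ 2 * vol o) = (n : ℝ) / 2 * x := by
      rw [hx]; field_simp; ring
    calc 1 / (4 * M) * ((n : ℝ) ^ 2 * vol o) = (n : ℝ) / 2 * x := heq
      _ ≤ (B.card : ℝ) * ((T : ℝ) + 1) := hmain
      _ ≤ ∑ i ∈ B, (c i : ℝ) := hsum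
      _ ≤ ∑ i ∈ S, (c i : ℝ) := hBS
  rw [Finset.mul_sum]
  calc ∑ o ∈ Finset.image len Finset.univ,
        1 / (4 * M) * (((Finset.univ.filter (fun i => len i = o)).card : ℝ) ^ 2 * vol o)
      ≤ ∑ o ∈ Finset.image len Finset.univ,
          ∑ i ∈ Finset.univ.filter (fun i => len i = o), (c i : ℝ) :=
        Finset.sum_le_sum key
    _ = ∑ i, (c i : ℝ) :=
        Finset.sum_fiberwise_of_maps_to
          (fun i _ => Finset.mem_image_of_mem len (Finset.mem_univ i)) _
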